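/- arXiv:0802.1185 — 2 statements merged into one kernel-verified Lean document; each statement's English description precedes it below -/
import Mathlib

section
/- Let 𝔻 be the open unit disc in ℂ and let n ≥ 1 be an integer. Then for all z, ζ ∈ 𝔻, ∫_{|w|>1} (z−w)^{−2} · n (conj(w−ζ))^{n−1} (w−ζ)^{−(n+1)} dA(w) = 0, where dA is planar Lebesgue measure (the integral converges absolutely). -/
open MeasureTheory Metric Set Filter Topology

noncomputable section

namespace Statement13Aux

/-- The integrand, with `c` the complex constant and exponents `m`, `m+2`. -/
def F (c z ζ : ℂ) (m : ℕ) (w : ℂ) : ℂ :=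
  ((z - w) ^ 2)⁻¹ * (c * (starRingEnd ℂ) (w - ζ) ^ m / (w - ζ) ^ (m + 2))

lemma measurable_F (c z ζ : ℂ) (m : ℕ) : Measurable (F c z ζ m) := by
  have h : Measurable (starRingEnd ℂ) := Complex.continuous_conj.measurable
  unfold F; fun_prop

lemma norm_F_le (c z ζ : ℂ) (m : ℕ) (hz : ‖z‖ < 1) (hζ : ‖ζ‖ < 1) (w : ℂ) (hw : 1 ≤ ‖w‖) :
    ‖F c z ζ m w‖ ≤ ‖c‖ * 2 ^ m / ((1 - ‖z‖) ^ 2 * (1 - ‖ζ‖) ^ (m + 2)) / ‖w‖ ^ 4 := by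
  have hw0 : (0:ℝ) < ‖w‖ := lt_of_lt_of_le one_pos hw
  have hc1 : (0:ℝ) < 1 - ‖z‖ := by linarith
  have hc2 : (0:ℝ) < 1 - ‖ζ‖ := by linarith
  have h1 : (1 - ‖z‖) * ‖w‖ ≤ ‖z - w‖ := by
    have h := norm_sub_norm_le w z
    rw [norm_sub_rev] at h
    nlinarith [norm_nonneg z]
  have h2 : (1 - ‖ζ‖) * ‖w‖ ≤ ‖w - ζ‖ := by
    have h := norm_sub_norm_le w ζ
    nlinarith [norm_nonneg ζ]
  have h3 : ‖w - ζ‖ ≤ 2 * ‖w‖ := by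
    have h := norm_sub_le w ζ
    nlinarith [norm_nonneg ζ]
  have hF : ‖F c z ζ m w‖ = ‖c‖ * ‖w - ζ‖ ^ m / (‖z - w‖ ^ 2 * ‖w - ζ‖ ^ (m + 2)) := by
    simp only [F, norm_mul, norm_div, norm_inv, norm_pow, RCLike.norm_conj]
    ring
  rw [hF]
  calc ‖c‖ * ‖w - ζ‖ ^ m / (‖z - w‖ ^ 2 * ‖w - ζ‖ ^ (m + 2))
      ≤ ‖c‖ * (2 * ‖w‖) ^ m / (((1 - ‖z‖) * ‖w‖) ^ 2 * ((1 - ‖ζ‖) * ‖w‖) ^ (m + 2)) := by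
        gcongr <;> positivity
    _ = ‖c‖ * 2 ^ m / ((1 - ‖z‖) ^ 2 * (1 - ‖ζ‖) ^ (m + 2)) / ‖w‖ ^ 4 := by
        rw [mul_pow, mul_pow, mul_pow, div_div, div_eq_div_iff (by positivity) (by positivity)]
        ring


lemma key (c z ζ : ℂ) (m : ℕ) (hz : ‖z‖ < 1) (hζ : ‖ζ‖ < 1) (r : ℝ) (hr : 1 < r) :
    (∫ θ in Ioo (-Real.pi) Real.pi, F c z ζ m (circleMap 0 r θ)) = 0 := by
  have hr0 : (0:ℝ) < r := by linarith
  have hc1 : (0:ℝ) < 1 - ‖z‖ := by linarith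
  have hc2 : (0:ℝ) < 1 - ‖ζ‖ := by linarith
  set g : ℂ → ℂ := fun w =>
    (Complex.I * w)⁻¹ * (((z - w) ^ 2)⁻¹ *
      (c * (((r:ℂ) ^ 2 / w) - (starRingEnd ℂ) ζ) ^ m / (w - ζ) ^ (m + 2))) with hgdef
  have hdiff : ∀ w : ℂ, 1 ≤ ‖w‖ → DifferentiableAt ℂ g w := by
    intro w hw
    have hw0 : w ≠ 0 := by intro h; rw [h] at hw; simp at hw; linarith
    have hwz : z - w ≠ 0 := by
      intro h; rw [sub_eq_zero] at h; rw [← h] at hw; linarith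
    have hwζ : w - ζ ≠ 0 := by
      intro h; rw [sub_eq_zero] at h; rw [h] at hw; linarith
    have hIw : Complex.I * w ≠ 0 := mul_ne_zero Complex.I_ne_zero hw0
    have h2 : (z - w) ^ 2 ≠ 0 := pow_ne_zero _ hwz
    have h3 : (w - ζ) ^ (m + 2) ≠ 0 := pow_ne_zero _ hwζ
    fun_prop (disch := assumption)
  -- pointwise identity on the circle of radius r
  have hFg : ∀ θ : ℝ, F c z ζ m (circleMap 0 r θ)
      = deriv (circleMap 0 r) θ • g (circleMap 0 r θ) := by
    intro θ
    set w := circleMap 0 r θ with hw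
    have habs : ‖w‖ = r := by
      rw [hw]; simp [norm_circleMap_zero, abs_of_pos hr0]
    have hw0 : w ≠ 0 := by
      intro h; rw [h] at habs; simp at habs; linarith
    have hconj : (starRingEnd ℂ) w = (r:ℂ) ^ 2 / w := by
      rw [eq_div_iff hw0]
      rw [mul_comm, Complex.mul_conj, Complex.normSq_eq_norm_sq, habs]
      push_cast
      ring
    have h1 : (w * Complex.I) * (Complex.I * w)⁻¹ = 1 := by
      rw [mul_comm w]; exact mul_inv_cancel₀ (mul_ne_zero Complex.I_ne_zero hw0)
    rw [deriv_circleMap]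
    simp only [smul_eq_mul, ← hw]
    rw [← mul_assoc, h1, one_mul, F, map_sub, hconj]
  -- the interval integral equals the circle integral
  have hA : (∫ θ in Ioo (-Real.pi) Real.pi, F c z ζ m (circleMap 0 r θ))
      = ∮ w in C(0, r), g w := by
    have hle : -Real.pi ≤ Real.pi := by linarith [Real.pi_pos]
    rw [← MeasureTheory.integral_Ioc_eq_integral_Ioo,
      ← intervalIntegral.integral_of_le hle]
    have hper : Function.Periodic (fun θ => F c z ζ m (circleMap 0 r θ)) (2 * Real.pi) :=
      fun θ => congrArg (F c z ζ m) ((periodic_circleMap 0 r) θ)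
    have heq := hper.intervalIntegral_add_eq (-Real.pi) 0
    rw [show -Real.pi + 2 * Real.pi = Real.pi by ring, zero_add] at heq
    rw [heq, circleIntegral]
    exact intervalIntegral.integral_congr fun θ _ => hFg θ
  -- annulus: circle integrals agree
  have hB : ∀ R : ℝ, r ≤ R → (∮ w in C(0, R), g w) = ∮ w in C(0, r), g w := by
    intro R hR
    refine Complex.circleIntegral_eq_of_differentiable_on_annulus_off_countable hr0 hR
      countable_empty ?_ ?_
    · intro w hw
      have h1 : 1 ≤ ‖w‖ := by
        have := hw.2
        simp only [mem_ball, dist_zero_right, not_lt] at this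
        linarith
      exact (hdiff w h1).continuousAt.continuousWithinAt
    · intro w hw
      have h1 : 1 ≤ ‖w‖ := by
        have := hw.1.2
        simp only [mem_closedBall, dist_zero_right, not_lt] at this
        linarith
      exact hdiff w h1
  set C : ℝ := ‖c‖ * (r ^ 2 + 1) ^ m / ((1 - ‖z‖) ^ 2 * (1 - ‖ζ‖) ^ (m + 2)) with hCdef
  have hC0 : 0 ≤ C := by positivity
  -- the bound on circles of radius R
  have hbound : ∀ R : ℝ, r ≤ R → ∀ w ∈ sphere (0:ℂ) R, ‖g w‖ ≤ C / R ^ 2 := by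
    intro R hR w hwmem
    have hR1 : (1:ℝ) ≤ R := le_trans hr.le hR
    have hR0 : (0:ℝ) < R := by linarith
    have hwR : ‖w‖ = R := by simpa [dist_zero_right] using hwmem
    have h1 : (1 - ‖z‖) * R ≤ ‖z - w‖ := by
      have h := norm_sub_norm_le w z
      rw [norm_sub_rev, hwR] at h
      nlinarith [norm_nonneg z]
    have h2 : (1 - ‖ζ‖) * R ≤ ‖w - ζ‖ := by
      have h := norm_sub_norm_le w ζ
      rw [hwR] at h
      nlinarith [norm_nonneg ζ]
    have h3 : ‖(r:ℂ) ^ 2 / w - (starRingEnd ℂ) ζ‖ ≤ r ^ 2 + 1 := by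
      calc ‖(r:ℂ) ^ 2 / w - (starRingEnd ℂ) ζ‖
          ≤ ‖(r:ℂ) ^ 2 / w‖ + ‖(starRingEnd ℂ) ζ‖ := norm_sub_le _ _
        _ = r ^ 2 / R + ‖ζ‖ := by
            rw [norm_div, norm_pow, RCLike.norm_conj, hwR, Complex.norm_real,
              Real.norm_eq_abs, abs_of_pos hr0]
        _ ≤ r ^ 2 + 1 := by
            have : r ^ 2 / R ≤ r ^ 2 := div_le_self (by positivity) hR1
            linarith
    have hgw : ‖g w‖ = ‖c‖ * ‖(r:ℂ) ^ 2 / w - (starRingEnd ℂ) ζ‖ ^ m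
        / (R * (‖z - w‖ ^ 2 * ‖w - ζ‖ ^ (m + 2))) := by
      simp only [hgdef, norm_mul, norm_div, norm_inv, norm_pow, Complex.norm_I, one_mul, hwR]
      ring
    rw [hgw]
    calc ‖c‖ * ‖(r:ℂ) ^ 2 / w - (starRingEnd ℂ) ζ‖ ^ m
        / (R * (‖z - w‖ ^ 2 * ‖w - ζ‖ ^ (m + 2)))
        ≤ ‖c‖ * (r ^ 2 + 1) ^ m
          / (R * (((1 - ‖z‖) * R) ^ 2 * (((1 - ‖ζ‖) * R)) ^ (m + 2))) := by
          gcongr <;> positivity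
      _ = C / R ^ (m + 5) := by
          have hden : R * (((1 - ‖z‖) * R) ^ 2 * ((1 - ‖ζ‖) * R) ^ (m + 2))
              = ((1 - ‖z‖) ^ 2 * (1 - ‖ζ‖) ^ (m + 2)) * R ^ (m + 5) := by
            rw [mul_pow, mul_pow]; ring
          rw [hden, hCdef, ← div_div]
      _ ≤ C / R ^ 2 := by
          apply div_le_div_of_nonneg_left hC0 (by positivity)
          exact pow_le_pow_right₀ hR1 (by omega)
  -- conclude by letting R → ∞
  have hnorm : ∀ R : ℝ, r ≤ R → ‖∮ w in C(0, r), g w‖ ≤ 2 * Real.pi * C / R := by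
    intro R hR
    have hR0 : (0:ℝ) < R := by linarith
    rw [← hB R hR]
    calc ‖∮ w in C(0, R), g w‖ ≤ 2 * Real.pi * R * (C / R ^ 2) := by
          have := circleIntegral.norm_integral_le_of_norm_le_const (le_of_lt hR0)
            (hbound R hR)
          simpa [abs_of_pos hR0] using this
      _ = 2 * Real.pi * C / R := by
          field_simp
  have htend : Tendsto (fun R : ℝ => 2 * Real.pi * C / R) atTop (nhds 0) :=
    Tendsto.div_atTop tendsto_const_nhds tendsto_id
  have hle0 : ‖∮ w in C(0, r), g w‖ ≤ 0 :=
    ge_of_tendsto htend ((eventually_ge_atTop r).mono fun R hR => hnorm R hR)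
  rw [hA]
  exact norm_le_zero_iff.mp hle0

lemma hSmeas : MeasurableSet {w : ℂ | 1 < ‖w‖} :=
  (isOpen_lt continuous_const continuous_norm).measurableSet

lemma integrableOn_F (c z ζ : ℂ) (m : ℕ) (hz : ‖z‖ < 1) (hζ : ‖ζ‖ < 1) :
    IntegrableOn (F c z ζ m) {w : ℂ | 1 < ‖w‖} := by
  set C0 : ℝ := ‖c‖ * 2 ^ m / ((1 - ‖z‖) ^ 2 * (1 - ‖ζ‖) ^ (m + 2)) with hC0def
  have hc1 : (0:ℝ) < 1 - ‖z‖ := by linarith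
  have hc2 : (0:ℝ) < 1 - ‖ζ‖ := by linarith
  have hC0 : 0 ≤ C0 := by positivity
  refine Integrable.mono' (g := fun w : ℂ => 16 * C0 * (1 + ‖w‖) ^ (-(4:ℝ))) ?_
    (measurable_F c z ζ m).aestronglyMeasurable ?_
  · exact ((integrable_one_add_norm (E := ℂ)
      (by rw [Complex.finrank_real_complex]; norm_num)).const_mul _).restrict
  · refine (ae_restrict_iff' hSmeas).mpr (ae_of_all _ fun w hw => ?_)
    have hw1 : 1 ≤ ‖w‖ := le_of_lt hw
    have hw0 : (0:ℝ) < ‖w‖ := lt_of_lt_of_le one_pos hw1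
    have hb := norm_F_le c z ζ m hz hζ w hw1
    have hrw : (1 + ‖w‖) ^ (-(4:ℝ)) = ((1 + ‖w‖) ^ (4:ℕ))⁻¹ := by
      rw [Real.rpow_neg (by positivity), ← Real.rpow_natCast]
      norm_num
    have h16 : (1 + ‖w‖) ^ (4:ℕ) ≤ 16 * ‖w‖ ^ 4 := by
      have h2 : 1 + ‖w‖ ≤ 2 * ‖w‖ := by linarith
      calc (1 + ‖w‖) ^ (4:ℕ) ≤ (2 * ‖w‖) ^ (4:ℕ) := by gcongr <;> positivity
        _ = 16 * ‖w‖ ^ 4 := by ring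
    calc ‖F c z ζ m w‖ ≤ C0 / ‖w‖ ^ 4 := hb
      _ = 16 * C0 / (16 * ‖w‖ ^ 4) := by
          rw [mul_div_mul_left _ _ (by norm_num : (16:ℝ) ≠ 0)]
      _ ≤ 16 * C0 / ((1 + ‖w‖) ^ (4:ℕ)) := by gcongr <;> positivity
      _ = 16 * C0 * (1 + ‖w‖) ^ (-(4:ℝ)) := by rw [hrw, div_eq_mul_inv]

lemma integral_F_eq_zero (c z ζ : ℂ) (m : ℕ) (hz : ‖z‖ < 1) (hζ : ‖ζ‖ < 1) :
    (∫ w in {w : ℂ | 1 < ‖w‖}, F c z ζ m w) = 0 := by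
  set C0 : ℝ := ‖c‖ * 2 ^ m / ((1 - ‖z‖) ^ 2 * (1 - ‖ζ‖) ^ (m + 2)) with hC0def
  have hc1 : (0:ℝ) < 1 - ‖z‖ := by linarith
  have hc2 : (0:ℝ) < 1 - ‖ζ‖ := by linarith
  have hC0 : 0 ≤ C0 := by positivity
  rw [← integral_indicator hSmeas, ← Complex.integral_comp_polarCoord_symm]
  have hTmeas : MeasurableSet polarCoord.target := polarCoord.open_target.measurableSet
  have hUmeas : MeasurableSet {p : ℝ × ℝ | 1 < p.1} :=
    (isOpen_lt continuous_const continuous_fst).measurableSet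
  have hEq : EqOn
      (fun p : ℝ × ℝ => p.1 • ({w : ℂ | 1 < ‖w‖}.indicator (F c z ζ m)
        (Complex.polarCoord.symm p)))
      (fun p : ℝ × ℝ => ({p : ℝ × ℝ | 1 < p.1}).indicator
        (fun p : ℝ × ℝ => p.1 • F c z ζ m (Complex.polarCoord.symm p)) p)
      polarCoord.target := by
    intro p hp
    have hp1 : 0 < p.1 := hp.1
    have hnorm : ‖Complex.polarCoord.symm p‖ = p.1 := by
      rw [Complex.norm_polarCoord_symm, abs_of_pos hp1]
    by_cases h : 1 < p.1
    · simp only [indicator, mem_setOf_eq, h, if_true, hnorm]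
    · simp only [indicator, mem_setOf_eq, h, if_false, hnorm]
      have : ¬ (1 < ‖Complex.polarCoord.symm p‖) := by rw [hnorm]; exact h
      simp [this]
  rw [setIntegral_congr_fun hTmeas hEq, setIntegral_indicator hUmeas]
  have hsetEq : polarCoord.target ∩ {p : ℝ × ℝ | 1 < p.1}
      = Ioi (1:ℝ) ×ˢ Ioo (-Real.pi) Real.pi := by
    rw [polarCoord_target]
    ext p
    simp only [mem_inter_iff, mem_prod, mem_Ioi, mem_Ioo, mem_setOf_eq]
    constructor
    · rintro ⟨⟨h0, h2⟩, h3⟩; exact ⟨h3, h2⟩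
    · rintro ⟨h1, h2⟩; exact ⟨⟨by linarith, h2⟩, h1⟩
  have hcont : Continuous fun p : ℝ × ℝ => Complex.polarCoord.symm p := by
    simp only [Complex.polarCoord_symm_apply]
    fun_prop
  -- integrability on the product set
  have hInt2 : IntegrableOn (fun p : ℝ × ℝ => p.1 • F c z ζ m (Complex.polarCoord.symm p))
      (Ioi (1:ℝ) ×ˢ Ioo (-Real.pi) Real.pi) (volume.prod volume) := by
    have hf1 : Integrable (fun x : ℝ => C0 * x ^ (-(3:ℝ))) (volume.restrict (Ioi 1)) :=
      (integrableOn_Ioi_rpow_of_lt (by norm_num) one_pos).const_mul C0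
    have hg_int : Integrable (fun p : ℝ × ℝ => (C0 * p.1 ^ (-(3:ℝ))) * (1:ℝ))
        ((volume.restrict (Ioi 1)).prod (volume.restrict (Ioo (-Real.pi) Real.pi))) :=
      Integrable.mul_prod hf1 (integrable_const 1)
    rw [Measure.prod_restrict] at hg_int
    simp only [mul_one] at hg_int
    refine Integrable.mono' hg_int ?_ ?_
    · have hm : Measurable (starRingEnd ℂ) := Complex.continuous_conj.measurable
      have hFm := measurable_F c z ζ m
      exact (measurable_fst.smul (hFm.comp hcont.measurable)).aestronglyMeasurable
    · refine (ae_restrict_iff' (measurableSet_Ioi.prod measurableSet_Ioo)).mpr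
        (ae_of_all _ fun p hp => ?_)
      have hp1 : 1 < p.1 := hp.1
      have hp0 : (0:ℝ) < p.1 := by linarith
      have hnorm : ‖Complex.polarCoord.symm p‖ = p.1 := by
        rw [Complex.norm_polarCoord_symm, abs_of_pos hp0]
      have hb := norm_F_le c z ζ m hz hζ (Complex.polarCoord.symm p) (by rw [hnorm]; linarith)
      rw [hnorm] at hb
      have hrpow : p.1 ^ (-(3:ℝ)) = (p.1 ^ (3:ℕ))⁻¹ := by
        rw [Real.rpow_neg hp0.le, ← Real.rpow_natCast]
        norm_num
      calc ‖p.1 • F c z ζ m (Complex.polarCoord.symm p)‖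
          = p.1 * ‖F c z ζ m (Complex.polarCoord.symm p)‖ := by
            rw [norm_smul, Real.norm_eq_abs, abs_of_pos hp0]
        _ ≤ p.1 * (C0 / p.1 ^ 4) := by gcongr
        _ = C0 * p.1 ^ (-(3:ℝ)) := by
            rw [hrpow]
            field_simp
  rw [hsetEq, Measure.volume_eq_prod, setIntegral_prod _ hInt2]
  have hinner : ∀ x ∈ Ioi (1:ℝ),
      (∫ y in Ioo (-Real.pi) Real.pi,
        (x, y).1 • F c z ζ m (Complex.polarCoord.symm (x, y))) = 0 := by
    intro x hx
    have hx1 : 1 < x := hx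
    have hsymm : ∀ y : ℝ, Complex.polarCoord.symm (x, y) = circleMap 0 x y := by
      intro y
      simp [Complex.polarCoord_symm_apply, circleMap, Complex.exp_mul_I]
    simp_rw [hsymm]
    rw [integral_smul, key c z ζ m hz hζ x hx1, smul_zero]
  rw [setIntegral_congr_fun measurableSet_Ioi hinner]
  simp

end Statement13Aux

/-- For the unit disc `𝔻` and `n ≥ 1`: for all `z, ζ ∈ 𝔻`, the integral
`∫_{|w|>1} (z−w)^{−2} · n conj(w−ζ)^{n−1} (w−ζ)^{−(n+1)} dA(w)` converges absolutely
and equals `0`. -/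
theorem statement13 (n : ℕ) (hn : 1 ≤ n)
    (z ζ : ℂ) (hz : z ∈ ball (0 : ℂ) 1) (hζ : ζ ∈ ball (0 : ℂ) 1) :
    IntegrableOn
      (fun w : ℂ =>
        ((z - w) ^ 2)⁻¹ * ((n : ℂ) * (starRingEnd ℂ) (w - ζ) ^ (n - 1) / (w - ζ) ^ (n + 1)))
      {w : ℂ | 1 < ‖w‖} ∧
    (∫ w in {w : ℂ | 1 < ‖w‖},
        ((z - w) ^ 2)⁻¹ *
          ((n : ℂ) * (starRingEnd ℂ) (w - ζ) ^ (n - 1) / (w - ζ) ^ (n + 1))) = 0 := by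
  obtain ⟨m, rfl⟩ : ∃ m, n = m + 1 := ⟨n - 1, (Nat.succ_pred_eq_of_pos hn).symm⟩
  rw [mem_ball_zero_iff] at hz hζ
  have hFeq : (fun w : ℂ =>
      ((z - w) ^ 2)⁻¹ * (((m + 1 : ℕ) : ℂ) * (starRingEnd ℂ) (w - ζ) ^ (m + 1 - 1)
        / (w - ζ) ^ (m + 1 + 1)))
      = Statement13Aux.F ((m + 1 : ℕ) : ℂ) z ζ m := by
    funext w
    simp [Statement13Aux.F]
  rw [hFeq]
  exact ⟨Statement13Aux.integrableOn_F _ z ζ m hz hζ,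
    Statement13Aux.integral_F_eq_zero _ z ζ m hz hζ⟩

end
end

section
/- Let f : ℝ^d → ℝ be m times continuously differentiable, and for a ∈ ℝ^d let T_m(f,a)(x) = Σ_{|α|≤m} (∂^α f(a)/α!) (x−a)^α denote its Taylor polynomial of degree m around a (sum over multi-indices α of ℝ^d with |α| ≤ m). Then for all a₁, a₂, x ∈ ℝ^d: T_m(f,a₁)(x) − T_m(f,a₂)(x) = Σ_{|α|≤m} (1/α!) [T_{m−|α|}(∂^α f, a₁)(a₂) − ∂^α f(a₂)] (x−a₂)^α. -/
noncomputable section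

/-- The partial derivative of `f : ℝ^d → ℝ` in the `i`-th coordinate direction. -/
def partialDeriv {d : ℕ} (i : Fin d) (f : (Fin d → ℝ) → ℝ) : (Fin d → ℝ) → ℝ :=
  fun x => deriv (fun t => f (Function.update x i t)) (x i)

/-- The iterated partial derivative `∂^α f` for a multi-index `α`. -/
def multiDeriv {d : ℕ} (α : Fin d → ℕ) (f : (Fin d → ℝ) → ℝ) : (Fin d → ℝ) → ℝ :=
  ((List.ofFn fun i : Fin d => (partialDeriv i)^[α i]).foldr (· ∘ ·) id) f

/-- The Taylor polynomial `T_m(f,a)(x) = Σ_{|α|≤m} (∂^α f(a)/α!) (x−a)^α`,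
the sum running over all multi-indices `α` with `|α| ≤ m` (each component of such a
multi-index is at most `m`, so they are encoded as functions `Fin d → Fin (m+1)`). -/
def taylorPoly {d : ℕ} (m : ℕ) (f : (Fin d → ℝ) → ℝ) (a x : Fin d → ℝ) : ℝ :=
  ∑ α : Fin d → Fin (m + 1),
    if (∑ i, (α i : ℕ)) ≤ m then
      multiDeriv (fun i => (α i : ℕ)) f a / (∏ i, ((α i : ℕ).factorial : ℝ)) *
        ∏ i, (x i - a i) ^ (α i : ℕ)
    else 0



theorem partialDeriv_eq_fderiv {d : ℕ} (i : Fin d) (f : (Fin d → ℝ) → ℝ) (x : Fin d → ℝ)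
    (hf : DifferentiableAt ℝ f x) :
    partialDeriv i f x = fderiv ℝ f x (Pi.single i 1) := by
  have h0 : HasDerivAt (Function.update x i) (Pi.single i (1:ℝ)) (x i) := hasDerivAt_update x i (x i)
  have hf' : HasFDerivAt f (fderiv ℝ f x) (Function.update x i (x i)) := by
    simpa using hf.hasFDerivAt
  have h1 := hf'.comp_hasDerivAt (x i) h0
  exact h1.deriv

/-- smoothness of partialDeriv -/
theorem partialDeriv_contDiff {d : ℕ} {n : ℕ} (i : Fin d) {f : (Fin d → ℝ) → ℝ}
    (hf : ContDiff ℝ (n+1 : ℕ) f) : ContDiff ℝ (n : ℕ) (partialDeriv i f) := by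
  have h1 : partialDeriv i f = fun x => fderiv ℝ f x (Pi.single i 1) := by
    funext x
    exact partialDeriv_eq_fderiv i f x (hf.differentiable (by simp) x)
  rw [h1]
  exact (hf.fderiv_right (by exact_mod_cast le_refl ((n:ℕ∞)+1))).clm_apply contDiff_const

theorem partialDeriv_comm {d : ℕ} {n : ℕ} (i j : Fin d) {f : (Fin d → ℝ) → ℝ}
    (hf : ContDiff ℝ (n+2 : ℕ) f) :
    partialDeriv i (partialDeriv j f) = partialDeriv j (partialDeriv i f) := by
  have hdiff : Differentiable ℝ f := hf.differentiable (by simp)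
  have hfd : ContDiff ℝ ((n+1 : ℕ)) (fderiv ℝ f) :=
    hf.fderiv_right (by exact_mod_cast le_refl ((n:ℕ∞)+2))
  have hfdd : Differentiable ℝ (fderiv ℝ f) :=
    hfd.differentiable (by simp)
  have key : ∀ u v : Fin d, ∀ x, partialDeriv u (partialDeriv v f) x
      = fderiv ℝ (fderiv ℝ f) x (Pi.single u 1) (Pi.single v 1) := by
    intro u v x
    have h1 : partialDeriv v f = fun y => fderiv ℝ f y (Pi.single v 1) := by
      funext y; exact partialDeriv_eq_fderiv v f y (hdiff y)
    have h2 : DifferentiableAt ℝ (fun y => fderiv ℝ f y (Pi.single v 1)) x :=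
      (hfdd x).clm_apply (differentiableAt_const _)
    rw [h1, partialDeriv_eq_fderiv _ _ _ h2,
      fderiv_clm_apply (hfdd x) (differentiableAt_const _)]
    simp
  funext x
  rw [key i j x, key j i x]
  exact (hf.contDiffAt.isSymmSndFDerivAt (by rw [minSmoothness_of_isRCLikeNormedField]; exact_mod_cast Nat.le_add_left 2 n)) _ _

def iterDeriv {d : ℕ} (L : List (Fin d)) (f : (Fin d → ℝ) → ℝ) : (Fin d → ℝ) → ℝ :=
  L.foldr partialDeriv f

@[simp] theorem iterDeriv_nil {d : ℕ} (f : (Fin d → ℝ) → ℝ) : iterDeriv [] f = f := rfl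
@[simp] theorem iterDeriv_cons {d : ℕ} (i : Fin d) (L : List (Fin d)) (f : (Fin d → ℝ) → ℝ) :
    iterDeriv (i :: L) f = partialDeriv i (iterDeriv L f) := rfl

theorem iterDeriv_append {d : ℕ} (L1 L2 : List (Fin d)) (f : (Fin d → ℝ) → ℝ) :
    iterDeriv (L1 ++ L2) f = iterDeriv L1 (iterDeriv L2 f) := List.foldr_append ..

theorem iterDeriv_contDiff {d : ℕ} (L : List (Fin d)) {n : ℕ} {f : (Fin d → ℝ) → ℝ}
    (hf : ContDiff ℝ (n : ℕ) f) (hL : L.length ≤ n) :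
    ContDiff ℝ ((n - L.length : ℕ)) (iterDeriv L f) := by
  induction L with
  | nil => simpa using hf
  | cons i L ih =>
    have hL' : L.length ≤ n := le_trans (by simp) hL
    have h1 := ih hL'
    have h2 : n - L.length = (n - (i :: L).length) + 1 := by
      simp at hL ⊢; omega
    rw [h2] at h1
    simpa using partialDeriv_contDiff i h1

theorem iterDeriv_perm {d : ℕ} {n : ℕ} {f : (Fin d → ℝ) → ℝ} (hf : ContDiff ℝ (n : ℕ) f)
    {L1 L2 : List (Fin d)} (hp : L1.Perm L2) (hl : L1.length ≤ n) :
    iterDeriv L1 f = iterDeriv L2 f := by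
  induction hp with
  | nil => rfl
  | cons i hp ih =>
    simp only [iterDeriv_cons]
    rw [ih (le_trans (by simp) hl)]
  | swap i j L =>
    simp only [iterDeriv_cons]
    have hlen : L.length + 2 ≤ n := by simp at hl; omega
    have hg : ContDiff ℝ ((n - L.length : ℕ)) (iterDeriv L f) :=
      iterDeriv_contDiff L hf (by omega)
    obtain ⟨k, hk⟩ : ∃ k, n - L.length = k + 2 := ⟨n - L.length - 2, by omega⟩
    rw [hk] at hg
    exact (partialDeriv_comm i j hg).symm
  | trans h1 h2 ih1 ih2 =>
    rw [ih1 hl, ih2 (h1.length_eq ▸ hl)]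


def mList {d : ℕ} (α : Fin d → ℕ) : List (Fin d) :=
  (List.ofFn fun i : Fin d => List.replicate (α i) i).flatten

theorem foldr_comp_apply {X : Type*} (L : List (X → X)) (x : X) :
    (L.foldr (· ∘ ·) id) x = L.foldr (fun g a => g a) x := by
  induction L with
  | nil => rfl
  | cons g L ih => simp [List.foldr_cons, Function.comp, ih]

theorem iterDeriv_replicate {d : ℕ} (k : ℕ) (i : Fin d) (f : (Fin d → ℝ) → ℝ) :
    iterDeriv (List.replicate k i) f = (partialDeriv i)^[k] f := by
  induction k with
  | zero => rfl
  | succ k ih => rw [List.replicate_succ, iterDeriv_cons, ih, Function.iterate_succ_apply']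

theorem multiDeriv_eq_iterDeriv {d : ℕ} (α : Fin d → ℕ) (f : (Fin d → ℝ) → ℝ) :
    multiDeriv α f = iterDeriv (mList α) f := by
  have key : ∀ J : List (Fin d),
      (J.map fun i => (partialDeriv i)^[α i]).foldr (fun g a => g a) f
        = iterDeriv ((J.map fun i => List.replicate (α i) i).flatten) f := by
    intro J
    induction J with
    | nil => rfl
    | cons i J ih =>
      simp only [List.map_cons, List.foldr_cons, List.flatten_cons, ih,
        iterDeriv_append, iterDeriv_replicate]
  rw [multiDeriv, foldr_comp_apply, mList, List.ofFn_eq_map, List.ofFn_eq_map, key]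

theorem count_mList {d : ℕ} (α : Fin d → ℕ) (j : Fin d) : (mList α).count j = α j := by
  rw [mList, List.count_flatten, List.map_ofFn]
  have : ∀ i : Fin d, ((List.replicate (α i) i).count j) = if i = j then α i else 0 := by
    intro i; simp [List.count_replicate]
  calc (List.ofFn fun i => (List.replicate (α i) i).count j).sum
      = ∑ i : Fin d, (List.replicate (α i) i).count j := by rw [List.sum_ofFn]
    _ = ∑ i : Fin d, if i = j then α i else 0 := by
        exact Finset.sum_congr rfl fun i _ => this i
    _ = α j := by simp

theorem length_mList {d : ℕ} (α : Fin d → ℕ) : (mList α).length = ∑ i, α i := by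
  rw [mList, List.length_flatten, List.map_ofFn]
  calc (List.ofFn fun i => (List.replicate (α i) i).length).sum
      = ∑ i : Fin d, (List.replicate (α i) i).length := by rw [List.sum_ofFn]
    _ = ∑ i, α i := by simp

theorem multiDeriv_comp {d n : ℕ} {f : (Fin d → ℝ) → ℝ} (hf : ContDiff ℝ (n : ℕ) f)
    (α β : Fin d → ℕ) (h : (∑ i, α i) + (∑ i, β i) ≤ n) :
    multiDeriv β (multiDeriv α f) = multiDeriv (fun i => α i + β i) f := by
  rw [multiDeriv_eq_iterDeriv, multiDeriv_eq_iterDeriv, multiDeriv_eq_iterDeriv,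
    ← iterDeriv_append]
  apply iterDeriv_perm hf
  · rw [List.perm_iff_count]
    intro j
    simp [List.count_append, count_mList, Nat.add_comm]
  · simp [List.length_append, length_mList]; omega

def NN (d m : ℕ) : Finset (Fin d → ℕ) := Fintype.piFinset fun _ => Finset.range (m+1)

theorem mem_NN {d m : ℕ} {γ : Fin d → ℕ} : γ ∈ NN d m ↔ ∀ i, γ i ≤ m := by
  simp [NN, Nat.lt_succ_iff]

theorem reindex {d m : ℕ} (F : (Fin d → ℕ) → ℝ) :
    (∑ α : Fin d → Fin (m+1), if (∑ i, (α i : ℕ)) ≤ m then F (fun i => (α i : ℕ)) else 0)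
      = ∑ γ ∈ NN d m, if (∑ i, γ i) ≤ m then F γ else 0 := by
  apply Finset.sum_nbij' (i := fun α => fun j => (α j : ℕ))
    (j := fun γ => fun j => (⟨min (γ j) m, by omega⟩ : Fin (m+1)))
  · intro α _; simp [mem_NN]; intro i; omega
  · intro γ _; exact Finset.mem_univ _
  · intro α _; funext j; have := (α j).isLt; apply Fin.ext; simp; omega
  · intro γ hγ; rw [mem_NN] at hγ; funext j; simp [Nat.min_eq_left (hγ j)]
  · intro α _; rfl

theorem taylor_eq {d : ℕ} (m : ℕ) (f : (Fin d → ℝ) → ℝ) (a x : Fin d → ℝ) :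
    taylorPoly m f a x = ∑ γ ∈ NN d m,
      if (∑ i, γ i) ≤ m then
        multiDeriv γ f a / (∏ i, ((γ i).factorial : ℝ)) * ∏ i, (x i - a i) ^ (γ i)
      else 0 :=
  reindex fun γ => multiDeriv γ f a / (∏ i, ((γ i).factorial : ℝ)) * ∏ i, (x i - a i) ^ (γ i)

theorem NN_mono {d m m' : ℕ} (h : m' ≤ m) : NN d m' ⊆ NN d m := by
  intro γ hγ; rw [mem_NN] at *; exact fun i => le_trans (hγ i) h

theorem sum_extend {d m m' : ℕ} (hm : m' ≤ m) (G : (Fin d → ℕ) → ℝ) :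
    (∑ β ∈ NN d m', if (∑ i, β i) ≤ m' then G β else 0)
      = ∑ β ∈ NN d m, if (∑ i, β i) ≤ m' then G β else 0 := by
  apply Finset.sum_subset (NN_mono hm)
  intro β hβ hβ'
  rw [mem_NN] at hβ'
  push_neg at hβ'
  obtain ⟨i, hi⟩ := hβ'
  have : β i ≤ ∑ j, β j := Finset.single_le_sum (f := fun j => β j) (fun _ _ => Nat.zero_le _) (Finset.mem_univ i)
  rw [if_neg (by omega)]

theorem binom {d : ℕ} (γ : Fin d → ℕ) (u v : Fin d → ℝ) :
    ∏ i, (u i + v i) ^ (γ i)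
      = ∑ κ ∈ Fintype.piFinset (fun i => Finset.range (γ i + 1)),
          ∏ i, (u i ^ (κ i) * v i ^ (γ i - κ i) * ((γ i).choose (κ i) : ℝ)) := by
  rw [← Finset.prod_univ_sum (t := fun i => Finset.range (γ i + 1))
    (f := fun i k => u i ^ k * v i ^ (γ i - k) * ((γ i).choose k : ℝ))]
  exact Finset.prod_congr rfl fun i _ => add_pow (u i) (v i) (γ i)

theorem binom_guarded {d m : ℕ} (γ : Fin d → ℕ) (hγ : γ ∈ NN d m) (u v : Fin d → ℝ) :
    ∏ i, (u i + v i) ^ (γ i)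
      = ∑ κ ∈ NN d m, if (∀ i, κ i ≤ γ i) then
          ∏ i, (u i ^ (κ i) * v i ^ (γ i - κ i) * ((γ i).choose (κ i) : ℝ)) else 0 := by
  rw [binom]
  rw [mem_NN] at hγ
  have hsub : Fintype.piFinset (fun i => Finset.range (γ i + 1)) ⊆ NN d m := by
    intro κ hκ
    simp only [Fintype.mem_piFinset, Finset.mem_range] at hκ
    rw [mem_NN]; intro i; have := hκ i; have := hγ i; omega
  rw [← Finset.sum_subset hsub (by
    intro κ _ hκ
    simp only [Fintype.mem_piFinset, Finset.mem_range] at hκ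
    push_neg at hκ
    obtain ⟨i, hi⟩ := hκ
    rw [if_neg]; push_neg; exact ⟨i, by omega⟩)]
  apply Finset.sum_congr rfl
  intro κ hκ
  simp only [Fintype.mem_piFinset, Finset.mem_range] at hκ
  rw [if_pos (fun i => by have := hκ i; omega)]

theorem fact_ne_zero {d : ℕ} (γ : Fin d → ℕ) : (∏ i, ((γ i).factorial : ℝ)) ≠ 0 :=
  Finset.prod_ne_zero_iff.2 fun i _ => Nat.cast_ne_zero.2 (γ i).factorial_ne_zero

theorem choose_prod {d : ℕ} (γ κ : Fin d → ℕ) (h : ∀ i, κ i ≤ γ i) :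
    (∏ i, (((γ i).choose (κ i)) : ℝ)) * (∏ i, ((κ i).factorial : ℝ))
      * (∏ i, (((γ i - κ i)).factorial : ℝ)) = ∏ i, ((γ i).factorial : ℝ) := by
  rw [← Finset.prod_mul_distrib, ← Finset.prod_mul_distrib]
  apply Finset.prod_congr rfl
  intro i _
  rw [← Nat.cast_mul, ← Nat.cast_mul, ← Nat.choose_mul_factorial_mul_factorial (h i)]

theorem main_comb {d m : ℕ} (D : (Fin d → ℕ) → ℝ) (u v : Fin d → ℝ) :
    (∑ γ ∈ NN d m, if (∑ i, γ i) ≤ m then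
        D γ / (∏ i, ((γ i).factorial : ℝ)) * ∏ i, (u i + v i) ^ (γ i) else 0)
      = ∑ p ∈ (NN d m) ×ˢ (NN d m), if (∑ i, p.1 i) + (∑ i, p.2 i) ≤ m then
          D (fun i => p.1 i + p.2 i)
            / ((∏ i, ((p.1 i).factorial : ℝ)) * (∏ i, ((p.2 i).factorial : ℝ)))
            * ((∏ i, (u i) ^ (p.1 i)) * (∏ i, (v i) ^ (p.2 i))) else 0 := by
  have step1 : ∀ γ ∈ NN d m, (if (∑ i, γ i) ≤ m then
        D γ / (∏ i, ((γ i).factorial : ℝ)) * ∏ i, (u i + v i) ^ (γ i) else 0)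
      = ∑ κ ∈ NN d m, if ((∑ i, γ i) ≤ m ∧ ∀ i, κ i ≤ γ i) then
          D γ / (∏ i, ((γ i).factorial : ℝ))
            * ∏ i, ((u i) ^ (κ i) * (v i) ^ (γ i - κ i) * (((γ i).choose (κ i)) : ℝ)) else 0 := by
    intro γ hγ
    by_cases hs : (∑ i, γ i) ≤ m
    · rw [if_pos hs, binom_guarded γ hγ u v, Finset.mul_sum]
      apply Finset.sum_congr rfl
      intro κ _
      rw [mul_ite, mul_zero]
      by_cases hκ : ∀ i, κ i ≤ γ i
      · rw [if_pos hκ, if_pos ⟨hs, hκ⟩]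
      · rw [if_neg hκ, if_neg (by tauto)]
    · rw [if_neg hs]
      symm
      apply Finset.sum_eq_zero
      intro κ _
      rw [if_neg (by tauto)]
  rw [Finset.sum_congr rfl step1, ← Finset.sum_product']
  rw [← Finset.sum_filter, ← Finset.sum_filter]
  apply Finset.sum_nbij'
    (i := fun p : (Fin d → ℕ) × (Fin d → ℕ) => (p.2, fun i => p.1 i - p.2 i))
    (j := fun q : (Fin d → ℕ) × (Fin d → ℕ) => ((fun i => q.1 i + q.2 i), q.1))
  · intro p hp
    simp only [Finset.mem_filter, Finset.mem_product, mem_NN] at hp ⊢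
    obtain ⟨⟨h1, h2⟩, hs, hle⟩ := hp
    refine ⟨⟨h2, fun i => le_trans (Nat.sub_le _ _) (h1 i)⟩, ?_⟩
    have : ∑ i, (p.1 i - p.2 i) = (∑ i, p.1 i) - ∑ i, p.2 i := by
      rw [eq_tsub_iff_add_eq_of_le (Finset.sum_le_sum fun i _ => hle i), ← Finset.sum_add_distrib]
      exact Finset.sum_congr rfl fun i _ => by have := hle i; omega
    have hle' : ∑ i, p.2 i ≤ ∑ i, p.1 i := Finset.sum_le_sum fun i _ => hle i
    omega
  · intro q hq
    simp only [Finset.mem_filter, Finset.mem_product, mem_NN] at hq ⊢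
    obtain ⟨⟨h1, h2⟩, hs⟩ := hq
    have hb : ∀ j, q.1 j + q.2 j ≤ m := by
      intro j
      have t1 : q.1 j ≤ ∑ i, q.1 i := Finset.single_le_sum (fun _ _ => Nat.zero_le _) (Finset.mem_univ j)
      have t2 : q.2 j ≤ ∑ i, q.2 i := Finset.single_le_sum (fun _ _ => Nat.zero_le _) (Finset.mem_univ j)
      omega
    refine ⟨⟨hb, h1⟩, ?_, fun i => by omega⟩
    rw [← Finset.sum_add_distrib] at *
    exact le_trans (Finset.sum_le_sum fun i _ => le_refl _) (by omega)
  · intro p hp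
    simp only [Finset.mem_filter, Finset.mem_product, mem_NN] at hp
    obtain ⟨_, _, hle⟩ := hp
    exact Prod.ext (funext fun i => by have := hle i; simp; omega) rfl
  · intro q hq
    exact Prod.ext rfl (funext fun i => by simp)
  · intro p hp
    simp only [Finset.mem_filter, Finset.mem_product, mem_NN] at hp
    obtain ⟨⟨hp1, hp2⟩, hs, hle⟩ := hp
    have hfun : (fun i => p.2 i + (p.1 i - p.2 i)) = p.1 := by
      funext i; have := hle i; omega
    rw [hfun]
    have key := choose_prod p.1 p.2 hle
    have A := fact_ne_zero p.1
    have B := fact_ne_zero p.2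
    have C := fact_ne_zero (fun i => p.1 i - p.2 i)
    rw [Finset.prod_mul_distrib, Finset.prod_mul_distrib]
    field_simp
    ring_nf
    ring_nf at key
    linear_combination (D p.1 * (∏ i, (u i) ^ (p.2 i)) * (∏ i, (v i) ^ (p.1 i - p.2 i))) * key

theorem key {d m : ℕ} {f : (Fin d → ℝ) → ℝ} (hf : ContDiff ℝ (m : ℕ) f) (a₁ a₂ x : Fin d → ℝ) :
    (∑ γ ∈ NN d m, if (∑ i, γ i) ≤ m then
        multiDeriv γ f a₁ / (∏ i, ((γ i).factorial : ℝ)) * ∏ i, (x i - a₁ i) ^ (γ i) else 0)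
      = ∑ α ∈ NN d m, if (∑ i, α i) ≤ m then
          (1 / ∏ i, ((α i).factorial : ℝ)) * taylorPoly (m - ∑ i, α i) (multiDeriv α f) a₁ a₂ *
            ∏ i, (x i - a₂ i) ^ (α i) else 0 := by
  have hsub : ∀ i, x i - a₁ i = (x i - a₂ i) + (a₂ i - a₁ i) := fun i => by ring
  calc (∑ γ ∈ NN d m, if (∑ i, γ i) ≤ m then
        multiDeriv γ f a₁ / (∏ i, ((γ i).factorial : ℝ)) * ∏ i, (x i - a₁ i) ^ (γ i) else 0)
      = ∑ γ ∈ NN d m, if (∑ i, γ i) ≤ m then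
        multiDeriv γ f a₁ / (∏ i, ((γ i).factorial : ℝ))
          * ∏ i, ((x i - a₂ i) + (a₂ i - a₁ i)) ^ (γ i) else 0 := by
        apply Finset.sum_congr rfl; intro γ _
        congr 2
        exact Finset.prod_congr rfl fun i _ => by rw [hsub i]
    _ = ∑ p ∈ (NN d m) ×ˢ (NN d m), if (∑ i, p.1 i) + (∑ i, p.2 i) ≤ m then
          multiDeriv (fun i => p.1 i + p.2 i) f a₁
            / ((∏ i, ((p.1 i).factorial : ℝ)) * (∏ i, ((p.2 i).factorial : ℝ)))
            * ((∏ i, (x i - a₂ i) ^ (p.1 i)) * (∏ i, (a₂ i - a₁ i) ^ (p.2 i))) else 0 :=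
        main_comb (fun γ => multiDeriv γ f a₁) _ _
    _ = ∑ α ∈ NN d m, ∑ β ∈ NN d m, if (∑ i, α i) + (∑ i, β i) ≤ m then
          multiDeriv (fun i => α i + β i) f a₁
            / ((∏ i, ((α i).factorial : ℝ)) * (∏ i, ((β i).factorial : ℝ)))
            * ((∏ i, (x i - a₂ i) ^ (α i)) * (∏ i, (a₂ i - a₁ i) ^ (β i))) else 0 :=
        (Finset.sum_product' (s := NN d m) (t := NN d m)
          (f := fun α β => if (∑ i, α i) + (∑ i, β i) ≤ m then
            multiDeriv (fun i => α i + β i) f a₁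
              / ((∏ i, ((α i).factorial : ℝ)) * (∏ i, ((β i).factorial : ℝ)))
              * ((∏ i, (x i - a₂ i) ^ (α i)) * (∏ i, (a₂ i - a₁ i) ^ (β i))) else 0))
    _ = ∑ α ∈ NN d m, if (∑ i, α i) ≤ m then
          (1 / ∏ i, ((α i).factorial : ℝ)) * taylorPoly (m - ∑ i, α i) (multiDeriv α f) a₁ a₂ *
            ∏ i, (x i - a₂ i) ^ (α i) else 0 := by
        apply Finset.sum_congr rfl
        intro α _
        by_cases hα : (∑ i, α i) ≤ m
        · rw [if_pos hα, taylor_eq, sum_extend (Nat.sub_le m _), Finset.mul_sum, Finset.sum_mul]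
          apply Finset.sum_congr rfl
          intro β _
          by_cases hβ : (∑ i, α i) + (∑ i, β i) ≤ m
          · rw [if_pos hβ, if_pos (by omega), multiDeriv_comp hf α β hβ]
            ring
          · rw [if_neg hβ, if_neg (by omega), mul_zero, zero_mul]
        · rw [if_neg hα]
          symm
          rw [Finset.sum_eq_zero]
          intro β _
          rw [if_neg (by omega)]


/-- For `f : ℝ^d → ℝ` of class `C^m` and all `a₁, a₂, x ∈ ℝ^d`:
`T_m(f,a₁)(x) − T_m(f,a₂)(x)
  = Σ_{|α|≤m} (1/α!) [T_{m−|α|}(∂^α f, a₁)(a₂) − ∂^α f(a₂)] (x−a₂)^α`. -/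
theorem statement15 {d : ℕ} (m : ℕ) (f : (Fin d → ℝ) → ℝ) (hf : ContDiff ℝ m f)
    (a₁ a₂ x : Fin d → ℝ) :
    taylorPoly m f a₁ x - taylorPoly m f a₂ x =
      ∑ α : Fin d → Fin (m + 1),
        if (∑ i, (α i : ℕ)) ≤ m then
          (1 / ∏ i, ((α i : ℕ).factorial : ℝ)) *
            (taylorPoly (m - ∑ i, (α i : ℕ)) (multiDeriv (fun i => (α i : ℕ)) f) a₁ a₂ -
              multiDeriv (fun i => (α i : ℕ)) f a₂) *
            ∏ i, (x i - a₂ i) ^ (α i : ℕ)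
        else 0 := by
  have hR : (∑ α : Fin d → Fin (m + 1),
        if (∑ i, (α i : ℕ)) ≤ m then
          (1 / ∏ i, ((α i : ℕ).factorial : ℝ)) *
            (taylorPoly (m - ∑ i, (α i : ℕ)) (multiDeriv (fun i => (α i : ℕ)) f) a₁ a₂ -
              multiDeriv (fun i => (α i : ℕ)) f a₂) *
            ∏ i, (x i - a₂ i) ^ (α i : ℕ)
        else 0)
      = ∑ γ ∈ NN d m, if (∑ i, γ i) ≤ m then
          (1 / ∏ i, ((γ i).factorial : ℝ)) *
            (taylorPoly (m - ∑ i, γ i) (multiDeriv γ f) a₁ a₂ - multiDeriv γ f a₂) *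
            ∏ i, (x i - a₂ i) ^ (γ i)
        else 0 :=
    reindex fun γ => (1 / ∏ i, ((γ i).factorial : ℝ)) *
      (taylorPoly (m - ∑ i, γ i) (multiDeriv γ f) a₁ a₂ - multiDeriv γ f a₂) *
      ∏ i, (x i - a₂ i) ^ (γ i)
  rw [hR, taylor_eq m f a₁ x, taylor_eq m f a₂ x]
  have split : ∀ γ ∈ NN d m, (if (∑ i, γ i) ≤ m then
        (1 / ∏ i, ((γ i).factorial : ℝ)) *
          (taylorPoly (m - ∑ i, γ i) (multiDeriv γ f) a₁ a₂ - multiDeriv γ f a₂) *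
          ∏ i, (x i - a₂ i) ^ (γ i) else 0)
      = (if (∑ i, γ i) ≤ m then
          (1 / ∏ i, ((γ i).factorial : ℝ)) *
            taylorPoly (m - ∑ i, γ i) (multiDeriv γ f) a₁ a₂ * ∏ i, (x i - a₂ i) ^ (γ i) else 0)
        - (if (∑ i, γ i) ≤ m then
            multiDeriv γ f a₂ / (∏ i, ((γ i).factorial : ℝ)) * ∏ i, (x i - a₂ i) ^ (γ i) else 0) := by
    intro γ _
    by_cases h : (∑ i, γ i) ≤ m
    · rw [if_pos h, if_pos h, if_pos h]; ring
    · rw [if_neg h, if_neg h, if_neg h]; ring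
  rw [Finset.sum_congr rfl split, Finset.sum_sub_distrib, ← key hf]

end
end
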